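/- Let M_1 and M_2 be matroids on finite ground sets E_1 and E_2 with E_1 \cap E_2 = {p}, where p is neither a loop nor a coloop of M_1 or of M_2, and let M_1 \oplus_2 M_2 be their 2-sum: the matroid on (E_1 \cup E_2) \setminus {p} whose independent sets are exactly the sets I_1 \cup I_2 with I_1 independent in M_1, I_2 independent in M_2, and either I_1 \cup {p} independent in M_1 or I_2 \cup {p} independent in M_2. Then (xy - x - y) T_{M_1 \oplus_2 M_2}(x,y) = (x-1) T_{M_1/p}(x,y) T_{M_2/p}(x,y) - T_{M_1/p}(x,y) T_{M_2 \setminus p}(x,y) - T_{M_1 \setminus p}(x,y) T_{M_2/p}(x,y) + (y-1) T_{M_1 \setminus p}(x,y) T_{M_2 \setminus p}(x,y). -/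

import Mathlib

open MvPolynomial Finset
open scoped Matroid

namespace TuttePaper

open Classical

variable {α : Type*}

/-- The rank of a set in a matroid: the maximum cardinality of an independent subset. -/
noncomputable def rk (M : Matroid α) (A : Set α) : ℕ :=
  sSup {n | ∃ I, M.Indep I ∧ I ⊆ A ∧ I.ncard = n}

/-- The Tutte polynomial of a matroid with finite ground set, as an element of ℤ[x,y];
the variable `X 0` plays the role of `x` and `X 1` that of `y`:
`T_M(x,y) = ∑_{A ⊆ E} (x-1)^(r(E)-r(A)) (y-1)^(|A|-r(A))`. -/
noncomputable def tutte (M : Matroid α) : MvPolynomial (Fin 2) ℤ :=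
  if hE : M.E.Finite then
    ∑ A ∈ hE.toFinset.powerset,
      (X 0 - 1) ^ (rk M M.E - rk M ↑A) * (X 1 - 1) ^ (A.card - rk M ↑A)
  else 0

/-- The Tutte polynomial with `x` evaluated at `1`, i.e. `T_M(1,y)`, as an element of ℤ[x,y]. -/
noncomputable def tutteX1 (M : Matroid α) : MvPolynomial (Fin 2) ℤ :=
  eval₂ C (fun i => if i = 0 then 1 else X 1) (tutte M)

/-- A loop of a matroid: an element whose singleton has rank zero. -/
def IsLoop (M : Matroid α) (e : α) : Prop := rk M {e} = 0

/-- A coloop of a matroid: an element contained in every basis. -/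
def IsColoop (M : Matroid α) (e : α) : Prop := ∀ B, M.IsBase B → e ∈ B

/-- A circuit of a matroid: a minimal dependent set. -/
def IsCircuit (M : Matroid α) (C : Set α) : Prop :=
  C ⊆ M.E ∧ ¬ M.Indep C ∧ ∀ D ⊂ C, M.Indep D

/-- A hyperplane of a matroid: a flat of rank `r(M) - 1`. -/
def IsHyperplane (M : Matroid α) (H : Set α) : Prop :=
  M.IsFlat H ∧ rk M H + 1 = rk M M.E

/-- Deletion of a set of elements from a matroid. -/
def deleteSet (M : Matroid α) (D : Set α) : Matroid α := M ↾ (M.E \ D)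

/-- Contraction of a set of elements in a matroid, `M/C = (M✶ \ C)✶`. -/
def contractSet (M : Matroid α) (C : Set α) : Matroid α := ((M✶) ↾ (M.E \ C))✶

/-- Deletion of a single element. -/
def deleteElem (M : Matroid α) (e : α) : Matroid α := deleteSet M {e}

/-- Contraction of a single element. -/
def contractElem (M : Matroid α) (e : α) : Matroid α := contractSet M {e}

/-- A matroid is paving if every circuit has size at least the rank of the matroid. -/
def Paving (M : Matroid α) : Prop := ∀ C, IsCircuit M C → rk M M.E ≤ C.ncard

/-- A matroid is sparse paving if it is paving and any two distinct circuits of size `r(M)`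
have symmetric difference of size greater than two. -/
def SparsePaving (M : Matroid α) : Prop :=
  Paving M ∧ ∀ C₁ C₂, IsCircuit M C₁ → IsCircuit M C₂ →
    C₁.ncard = rk M M.E → C₂.ncard = rk M M.E → C₁ ≠ C₂ → 2 < (symmDiff C₁ C₂).ncard

/-- An `m`-partition of a set `E`: a collection of at least two subsets of `E`, each with at
least `m` elements, such that every `m`-element subset of `E` is contained in exactly one
member of the collection. -/
def IsMPartition (m : ℕ) (E : Set α) (T : Set (Set α)) : Prop :=
  1 < T.ncard ∧ (∀ B ∈ T, B ⊆ E ∧ m ≤ B.ncard) ∧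
    ∀ S ⊆ E, S.ncard = m → ∃! B, B ∈ T ∧ S ⊆ B

/-- `tcoef M i j` is the coefficient `t_{ij}` of `x^i y^j` in the Tutte polynomial of `M`. -/
noncomputable def tcoef (M : Matroid α) (i j : ℕ) : ℤ :=
  MvPolynomial.coeff (Finsupp.single (0 : Fin 2) i + Finsupp.single (1 : Fin 2) j) (tutte M)

/-- The characteristic polynomial `χ_N(λ) = ∑_{A ⊆ E} (-1)^{|A|} λ^{r(E)-r(A)}` of a matroid,
evaluated at an element `l` of a commutative ring. -/
noncomputable def charEval {R : Type*} [CommRing R] (N : Matroid α) (l : R) : R :=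
  if hE : N.E.Finite then
    ∑ A ∈ hE.toFinset.powerset, (-1 : R) ^ A.card * l ^ (rk N N.E - rk N ↑A)
  else 0

/-- Crapo's coboundary polynomial `χ̄_M(λ,t) = ∑_{X flat of M} t^{|X|} χ_{M/X}(λ)`,
evaluated at elements `l`, `t` of a commutative ring. -/
noncomputable def cobEval {R : Type*} [CommRing R] (M : Matroid α) (l t : R) : R :=
  if hE : M.E.Finite then
    (hE.toFinset.powerset.filter (fun F : Finset α => M.IsFlat ↑F)).sum
      (fun F => t ^ F.card * charEval (contractSet M ↑F) l)
  else 0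

section RkBasic

variable {M : Matroid α} {A B I J : Set α} {p : α} {n : ℕ}

lemma rk_set_bdd (hfin : M.E.Finite) (A : Set α) :
    BddAbove {n | ∃ I, M.Indep I ∧ I ⊆ A ∧ I.ncard = n} := by
  refine ⟨M.E.ncard, ?_⟩
  rintro n ⟨I, hI, -, rfl⟩
  exact Set.ncard_le_ncard hI.subset_ground hfin

lemma le_rk (hfin : M.E.Finite) (hI : M.Indep I) (hIA : I ⊆ A) : I.ncard ≤ rk M A :=
  le_csSup (rk_set_bdd hfin A) ⟨I, hI, hIA, rfl⟩

lemma exists_rk (hfin : M.E.Finite) (A : Set α) :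
    ∃ I, M.Indep I ∧ I ⊆ A ∧ I.ncard = rk M A := by
  have hne : {n | ∃ I, M.Indep I ∧ I ⊆ A ∧ I.ncard = n}.Nonempty :=
    ⟨0, ∅, M.empty_indep, by simp⟩
  exact Nat.sSup_mem hne (rk_set_bdd hfin A)

lemma rk_le (hfin : M.E.Finite) (h : ∀ I, M.Indep I → I ⊆ A → I.ncard ≤ n) : rk M A ≤ n := by
  obtain ⟨I, hI, hIA, hcard⟩ := exists_rk hfin A
  rw [← hcard]; exact h I hI hIA

lemma rk_mono (hfin : M.E.Finite) (hAB : A ⊆ B) : rk M A ≤ rk M B :=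
  rk_le hfin fun I hI hIA => le_rk hfin hI (hIA.trans hAB)

lemma rk_le_ncard (hfin : M.E.Finite) (hA : A.Finite) : rk M A ≤ A.ncard := by
  obtain ⟨I, hI, hIA, hcard⟩ := exists_rk hfin A
  rw [← hcard]; exact Set.ncard_le_ncard hIA hA

lemma rk_insert_le (hfin : M.E.Finite) : rk M (insert p A) ≤ rk M A + 1 := by
  refine rk_le hfin fun I hI hIA => ?_
  have hIfin : I.Finite := hfin.subset hI.subset_ground
  have h1 : I \ {p} ⊆ A := by
    intro x hx
    rcases hIA hx.1 with h | h
    · exact absurd h hx.2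
    · exact h
  have h2 : (I \ {p}).ncard ≤ rk M A := le_rk hfin (hI.subset Set.diff_subset) h1
  have h3 : I.ncard ≤ (I \ {p}).ncard + 1 := by
    by_cases hp : p ∈ I
    · rw [Set.ncard_diff_singleton_of_mem hp]
      have hpos : 0 < I.ncard := (Set.ncard_pos hIfin).2 ⟨p, hp⟩
      omega
    · rw [Set.diff_singleton_eq_self hp]; omega
  omega

lemma exists_extend (hfin : M.E.Finite) (k : ℕ) :
    ∀ I, M.Indep I → I ⊆ A → I.ncard + k = rk M A →
      ∃ B, M.Indep B ∧ I ⊆ B ∧ B ⊆ A ∧ B.ncard = rk M A := by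
  induction k with
  | zero => exact fun I hI hIA h => ⟨I, hI, subset_rfl, hIA, by omega⟩
  | succ k ih =>
    intro I hI hIA h
    obtain ⟨J, hJ, hJA, hJcard⟩ := exists_rk hfin A
    have hlt : I.encard < J.encard := by
      rw [← (hfin.subset hI.subset_ground).cast_ncard_eq,
        ← (hfin.subset hJ.subset_ground).cast_ncard_eq]
      exact_mod_cast by omega
    obtain ⟨e, he, hins⟩ := hI.augment hJ hlt
    have hcard : (insert e I).ncard + k = rk M A := by
      rw [Set.ncard_insert_of_notMem he.2 (hfin.subset hI.subset_ground)]; omega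
    obtain ⟨B, h1, h2, h3, h4⟩ := ih (insert e I) hins (Set.insert_subset (hJA he.1) hIA) hcard
    exact ⟨B, h1, (Set.subset_insert _ _).trans h2, h3, h4⟩

lemma exists_basis_superset (hfin : M.E.Finite) (hI : M.Indep I) (hIA : I ⊆ A) :
    ∃ B, M.Indep B ∧ I ⊆ B ∧ B ⊆ A ∧ B.ncard = rk M A := by
  have hle := le_rk hfin hI hIA
  exact exists_extend hfin (rk M A - I.ncard) I hI hIA (by omega)

lemma indep_singleton_of_not_isLoop (hfin : M.E.Finite) (hl : ¬ IsLoop M p) : M.Indep {p} := by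
  obtain ⟨I, hI, hIp, hcard⟩ := exists_rk hfin {p}
  have hne : rk M {p} ≠ 0 := hl
  have : I.Nonempty := Set.nonempty_of_ncard_ne_zero (by omega)
  rwa [(this.subset_singleton_iff.1 hIp)] at hI

lemma rk_singleton (hfin : M.E.Finite) (hl : ¬ IsLoop M p) : rk M {p} = 1 := by
  have h1 : 1 ≤ rk M {p} := by
    have := le_rk hfin (indep_singleton_of_not_isLoop hfin hl) (subset_rfl (a := {p}))
    simpa using this
  have h2 : rk M {p} ≤ 1 := by
    have := rk_le_ncard (M := M) (A := {p}) hfin (Set.finite_singleton p)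
    simpa using this
  omega

lemma base_ncard (hfin : M.E.Finite) (hB : M.IsBase B) : B.ncard = rk M M.E := by
  refine le_antisymm (le_rk hfin hB.indep hB.subset_ground) ?_
  obtain ⟨J, hJ, hJE, hJcard⟩ := exists_rk hfin M.E
  obtain ⟨B', hB', hJB'⟩ := hJ.exists_isBase_superset
  calc rk M M.E = J.ncard := hJcard.symm
    _ ≤ B'.ncard := Set.ncard_le_ncard hJB' (hfin.subset hB'.subset_ground)
    _ = B.ncard := hB'.ncard_eq_ncard_of_isBase hB

lemma rk_diff_of_not_coloop (hfin : M.E.Finite) (hc : ¬ IsColoop M p) :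
    rk M (M.E \ {p}) = rk M M.E := by
  simp only [IsColoop, not_forall] at hc
  obtain ⟨B, hB, hpB⟩ := hc
  refine le_antisymm (rk_mono hfin Set.diff_subset) ?_
  rw [← base_ncard hfin hB]
  exact le_rk hfin hB.indep (Set.subset_diff_singleton hB.subset_ground hpB)

end RkBasic

section Minor

variable {M : Matroid α} {A I : Set α} {p : α}

lemma deleteElem_ground : (deleteElem M p).E = M.E \ {p} := rfl

lemma deleteElem_indep_iff : (deleteElem M p).Indep I ↔ M.Indep I ∧ I ⊆ M.E \ {p} :=
  Matroid.restrict_indep_iff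

lemma rk_deleteElem (hA : A ⊆ M.E \ {p}) : rk (deleteElem M p) A = rk M A := by
  unfold rk
  congr 1
  ext n
  constructor
  · rintro ⟨I, hI, hIA, rfl⟩
    exact ⟨I, (deleteElem_indep_iff.1 hI).1, hIA, rfl⟩
  · rintro ⟨I, hI, hIA, rfl⟩
    exact ⟨I, deleteElem_indep_iff.2 ⟨hI, hIA.trans hA⟩, hIA, rfl⟩

lemma contractElem_ground : (contractElem M p).E = M.E \ {p} := rfl

lemma dual_basis_diff_iff (hp : M.Indep {p}) {B : Set α} :
    M✶.IsBasis B (M.E \ {p}) ↔ M✶.IsBase B ∧ p ∉ B := by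
  have hpE : p ∈ M.E := hp.subset_ground rfl
  have hXE : M.E \ {p} ⊆ M✶.E := by rw [Matroid.dual_ground]; exact Set.diff_subset
  have hcompl : M✶.E \ (M.E \ {p}) = {p} := by
    rw [Matroid.dual_ground]
    rw [Set.diff_diff_cancel_left (by simpa using hpE)]
  constructor
  · intro h
    obtain ⟨D, hD, hBD⟩ := h.exists_isBase
    have hiff := hD.inter_isBasis_iff_compl_inter_isBasis_dual hXE
    rw [hcompl, Matroid.dual_dual] at hiff
    have hbas : M.IsBasis ((M✶.E \ D) ∩ {p}) {p} := hiff.1 (by rwa [← hBD])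
    have hpD : p ∉ D := by
      intro hpD
      have h0 : (M✶.E \ D) ∩ {p} = ∅ := by
        ext x; simp only [Set.mem_inter_iff, Set.mem_diff, Set.mem_singleton_iff,
          Set.mem_empty_iff_false, iff_false]
        rintro ⟨⟨-, hxD⟩, rfl⟩; exact hxD hpD
      rw [h0] at hbas
      have := hbas.eq_of_subset_indep hp (Set.empty_subset _) subset_rfl
      exact (Set.singleton_ne_empty p) this.symm
    have hDsub : D ⊆ M.E \ {p} := by
      rw [Matroid.dual_ground] at *
      exact Set.subset_diff_singleton hD.subset_ground hpD
    rw [hBD, Set.inter_eq_self_of_subset_left hDsub]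
    exact ⟨hD, hpD⟩
  · rintro ⟨hD, hpD⟩
    have hiff := hD.inter_isBasis_iff_compl_inter_isBasis_dual hXE
    rw [hcompl, Matroid.dual_dual] at hiff
    have h1 : (M✶.E \ B) ∩ {p} = {p} := by
      ext x; simp only [Set.mem_inter_iff, Set.mem_diff, Set.mem_singleton_iff,
        Matroid.dual_ground]
      constructor
      · rintro ⟨-, rfl⟩; rfl
      · rintro rfl; exact ⟨⟨hpE, hpD⟩, rfl⟩
    have hbas : M.IsBasis ((M✶.E \ B) ∩ {p}) {p} := by rw [h1]; exact hp.isBasis_self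
    have := hiff.2 hbas
    have hBsub : B ⊆ M.E \ {p} := by
      have := hD.subset_ground
      rw [Matroid.dual_ground] at this
      exact Set.subset_diff_singleton this hpD
    rwa [Set.inter_eq_self_of_subset_left hBsub] at this

lemma contractElem_indep_iff (hp : M.Indep {p}) :
    (contractElem M p).Indep I ↔ p ∉ I ∧ M.Indep (insert p I) := by
  have hpE : p ∈ M.E := hp.subset_ground rfl
  constructor
  · intro h
    rw [contractElem, contractSet] at h
    obtain ⟨hIsub, B, hB, hdisj⟩ := Matroid.dual_indep_iff_exists'.1 h
    rw [Matroid.restrict_ground_eq] at hIsub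
    rw [Matroid.isBase_restrict_iff'] at hB
    rw [Matroid.isBasis'_iff_isBasis (by rw [Matroid.dual_ground]; exact Set.diff_subset)] at hB
    rw [dual_basis_diff_iff hp] at hB
    obtain ⟨hB, hpB⟩ := hB
    have hC : M.IsBase (M.E \ B) := hB.compl_isBase_of_dual
    have hIC : I ⊆ M.E \ B := fun x hx =>
      ⟨(hIsub hx).1, fun hxB => Set.disjoint_left.1 hdisj hx hxB⟩
    have hpC : p ∈ M.E \ B := ⟨hpE, hpB⟩
    exact ⟨fun hpI => (hIsub hpI).2 rfl,
      hC.indep.subset (Set.insert_subset hpC hIC)⟩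
  · rintro ⟨hpI, hins⟩
    obtain ⟨C, hC, hsub⟩ := hins.exists_isBase_superset
    have hpC : p ∈ C := hsub (Set.mem_insert _ _)
    have hIC : I ⊆ C := (Set.subset_insert _ _).trans hsub
    rw [contractElem, contractSet]
    rw [show (((M✶) ↾ (M.E \ {p}))✶).Indep I ↔ _ from Matroid.dual_indep_iff_exists']
    refine ⟨?_, M.E \ C, ?_, ?_⟩
    · rw [Matroid.restrict_ground_eq]
      exact Set.subset_diff_singleton (hins.subset_ground.trans' (Set.subset_insert _ _)) hpI
    · rw [Matroid.isBase_restrict_iff', Matroid.isBasis'_iff_isBasis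
        (by rw [Matroid.dual_ground]; exact Set.diff_subset), dual_basis_diff_iff hp]
      exact ⟨hC.compl_isBase_dual, fun h => h.2 hpC⟩
    · exact Set.disjoint_left.2 fun x hx hxd => hxd.2 (hIC hx)

lemma rk_contractElem (hfin : M.E.Finite) (hp : M.Indep {p}) (hA : A ⊆ M.E \ {p}) :
    rk (contractElem M p) A + 1 = rk M (insert p A) := by
  have hpE : p ∈ M.E := hp.subset_ground rfl
  have hpA : p ∉ A := fun h => (hA h).2 rfl
  have hconfin : (contractElem M p).E.Finite := by
    rw [contractElem_ground]; exact hfin.subset Set.diff_subset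
  refine le_antisymm ?_ ?_
  · obtain ⟨I, hI, hIA, hIcard⟩ := exists_rk hconfin A
    rw [contractElem_indep_iff hp] at hI
    obtain ⟨hpI, hins⟩ := hI
    have : (insert p I).ncard = I.ncard + 1 :=
      Set.ncard_insert_of_notMem hpI (hfin.subset (hins.subset_ground.trans' (Set.subset_insert _ _)))
    have hle := le_rk hfin hins (Set.insert_subset_insert hIA)
    omega
  · obtain ⟨B, hB, hpB, hBsub, hBcard⟩ :=
      exists_basis_superset hfin hp (Set.singleton_subset_iff.2 (Set.mem_insert p A))
    have hpmem : p ∈ B := hpB rfl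
    have hBfin : B.Finite := hfin.subset hB.subset_ground
    have hIb : (contractElem M p).Indep (B \ {p}) := by
      rw [contractElem_indep_iff hp]
      refine ⟨fun h => h.2 rfl, ?_⟩
      rwa [Set.insert_diff_singleton, Set.insert_eq_of_mem hpmem]
    have hsubA : B \ {p} ⊆ A := by
      intro x hx
      rcases hBsub hx.1 with h | h
      · exact absurd h hx.2
      · exact h
    have hle := le_rk hconfin hIb hsubA
    have hcard : (B \ {p}).ncard = B.ncard - 1 := Set.ncard_diff_singleton_of_mem hpmem
    have hpos : 0 < B.ncard := (Set.ncard_pos hBfin).2 ⟨p, hpmem⟩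
    omega

end Minor

section PQ

noncomputable def pPoly (N : Matroid α) (p : α) (F : Finset α) : MvPolynomial (Fin 2) ℤ :=
  ∑ A ∈ F.powerset.filter (fun A : Finset α => rk N (insert p ↑A) = rk N ↑A),
    (X 0 - 1) ^ (rk N N.E - rk N (↑A : Set α)) * (X 1 - 1) ^ (A.card - rk N (↑A : Set α))

noncomputable def qPoly (N : Matroid α) (p : α) (F : Finset α) : MvPolynomial (Fin 2) ℤ :=
  ∑ A ∈ F.powerset.filter (fun A : Finset α => ¬ (rk N (insert p ↑A) = rk N ↑A)),
    (X 0 - 1) ^ (rk N N.E - 1 - rk N (↑A : Set α)) * (X 1 - 1) ^ (A.card - rk N (↑A : Set α))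

variable {N : Matroid α} {p : α} {F : Finset α}

lemma tutte_deleteElem (hfin : N.E.Finite) (hF : ↑F = N.E \ {p}) (hpE : p ∈ N.E)
    (hc : ¬ IsColoop N p) :
    tutte (deleteElem N p) = pPoly N p F + (X 0 - 1) * qPoly N p F := by
  have hfin' : (deleteElem N p).E.Finite := by
    rw [deleteElem_ground]; exact hfin.subset Set.diff_subset
  have htF : hfin'.toFinset = F := by
    apply Finset.coe_injective
    rw [Set.Finite.coe_toFinset, deleteElem_ground, hF]
  have hgr : rk (deleteElem N p) (deleteElem N p).E = rk N N.E := by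
    rw [deleteElem_ground, rk_deleteElem subset_rfl, rk_diff_of_not_coloop hfin hc]
  have hsum : tutte (deleteElem N p) = ∑ A ∈ F.powerset,
      ((X 0 - 1) ^ (rk N N.E - rk N (↑A : Set α)) *
        (X 1 - 1) ^ (A.card - rk N (↑A : Set α)) : MvPolynomial (Fin 2) ℤ) := by
    rw [tutte, dif_pos hfin', htF]
    refine Finset.sum_congr rfl fun A hA => ?_
    have hAsub : (↑A : Set α) ⊆ N.E \ {p} := by
      rw [← hF]; exact Finset.coe_subset.2 (Finset.mem_powerset.1 hA)
    rw [hgr, rk_deleteElem hAsub]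
  rw [hsum,
    ← Finset.sum_filter_add_sum_filter_not F.powerset (fun A => rk N (insert p ↑A) = rk N ↑A)]
  congr 1
  rw [qPoly, Finset.mul_sum]
  refine Finset.sum_congr rfl fun A hA => ?_
  rw [Finset.mem_filter] at hA
  obtain ⟨hA, hne⟩ := hA
  have hAsub : (↑A : Set α) ⊆ N.E \ {p} := by
    rw [← hF]; exact Finset.coe_subset.2 (Finset.mem_powerset.1 hA)
  have h1 : rk N ↑A ≤ rk N (insert p ↑A) := rk_mono hfin (Set.subset_insert _ _)
  have h2 : rk N (insert p ↑A) ≤ rk N ↑A + 1 := rk_insert_le hfin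
  have h3 : rk N (insert p ↑A) ≤ rk N N.E :=
    rk_mono hfin (Set.insert_subset hpE (hAsub.trans Set.diff_subset))
  rw [show rk N N.E - rk N (↑A : Set α) = (rk N N.E - 1 - rk N ↑A) + 1 from by omega, pow_succ]
  ring

lemma tutte_contractElem (hfin : N.E.Finite) (hF : ↑F = N.E \ {p}) (hl : ¬ IsLoop N p) :
    tutte (contractElem N p) = (X 1 - 1) * pPoly N p F + qPoly N p F := by
  have hp : N.Indep {p} := indep_singleton_of_not_isLoop hfin hl
  have hpE : p ∈ N.E := hp.subset_ground rfl
  have hfin' : (contractElem N p).E.Finite := by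
    rw [contractElem_ground]; exact hfin.subset Set.diff_subset
  have htF : hfin'.toFinset = F := by
    apply Finset.coe_injective
    rw [Set.Finite.coe_toFinset, contractElem_ground, hF]
  have hgr : rk (contractElem N p) (contractElem N p).E + 1 = rk N N.E := by
    rw [contractElem_ground, rk_contractElem hfin hp subset_rfl,
      Set.insert_diff_singleton, Set.insert_eq_of_mem hpE]
  have hsum : tutte (contractElem N p) = ∑ A ∈ F.powerset,
      ((X 0 - 1) ^ (rk (contractElem N p) (contractElem N p).E - rk (contractElem N p) (↑A : Set α)) *
        (X 1 - 1) ^ (A.card - rk (contractElem N p) (↑A : Set α)) : MvPolynomial (Fin 2) ℤ) := by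
    rw [tutte, dif_pos hfin', htF]
  rw [hsum,
    ← Finset.sum_filter_add_sum_filter_not F.powerset (fun A => rk N (insert p ↑A) = rk N ↑A)]
  congr 1
  · rw [pPoly, Finset.mul_sum]
    refine Finset.sum_congr rfl fun A hA => ?_
    rw [Finset.mem_filter] at hA
    obtain ⟨hA, hsp⟩ := hA
    have hAsub : (↑A : Set α) ⊆ N.E \ {p} := by
      rw [← hF]; exact Finset.coe_subset.2 (Finset.mem_powerset.1 hA)
    have hcon : rk (contractElem N p) ↑A + 1 = rk N (insert p ↑A) :=
      rk_contractElem hfin hp hAsub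
    have h1 : 1 ≤ rk N (insert p ↑A) := by
      rw [← rk_singleton hfin hl]
      exact rk_mono hfin (Set.singleton_subset_iff.2 (Set.mem_insert _ _))
    have h2 : rk N ↑A ≤ rk N N.E := rk_mono hfin (hAsub.trans Set.diff_subset)
    have h3 : rk N ↑A ≤ A.card := by
      have := rk_le_ncard (M := N) (A := (↑A : Set α)) hfin A.finite_toSet
      rwa [Set.ncard_coe_finset] at this
    rw [show rk (contractElem N p) (contractElem N p).E - rk (contractElem N p) (↑A : Set α)
        = rk N N.E - rk N ↑A from by omega,
      show A.card - rk (contractElem N p) (↑A : Set α) = (A.card - rk N ↑A) + 1 from by omega,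
      pow_succ]
    ring
  · refine Finset.sum_congr rfl fun A hA => ?_
    rw [Finset.mem_filter] at hA
    obtain ⟨hA, hsp⟩ := hA
    have hAsub : (↑A : Set α) ⊆ N.E \ {p} := by
      rw [← hF]; exact Finset.coe_subset.2 (Finset.mem_powerset.1 hA)
    have hcon : rk (contractElem N p) ↑A + 1 = rk N (insert p ↑A) :=
      rk_contractElem hfin hp hAsub
    have h1 : rk N ↑A ≤ rk N (insert p ↑A) := rk_mono hfin (Set.subset_insert _ _)
    have h2 : rk N (insert p ↑A) ≤ rk N ↑A + 1 := rk_insert_le hfin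
    rw [show rk (contractElem N p) (contractElem N p).E - rk (contractElem N p) (↑A : Set α)
        = rk N N.E - 1 - rk N ↑A from by omega,
      show A.card - rk (contractElem N p) (↑A : Set α) = A.card - rk N ↑A from by omega]

end PQ

section TwoSumRk

variable {M M₁ M₂ N : Matroid α} {p : α}

lemma exists_pbasis (hfin : N.E.Finite) (hl : ¬ IsLoop N p) {A : Set α} (hA : A ⊆ N.E \ {p}) :
    ∃ B, N.Indep B ∧ B ⊆ A ∧ p ∉ B ∧ N.Indep (insert p B) ∧
      B.ncard + 1 = rk N (insert p A) := by
  have hp : N.Indep {p} := indep_singleton_of_not_isLoop hfin hl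
  obtain ⟨B', hB', hsub', hB'A, hcard⟩ :=
    exists_basis_superset hfin hp (Set.singleton_subset_iff.2 (Set.mem_insert p A))
  have hpB' : p ∈ B' := hsub' rfl
  have hB'fin : B'.Finite := hfin.subset hB'.subset_ground
  refine ⟨B' \ {p}, hB'.subset Set.diff_subset, ?_, fun h => h.2 rfl, ?_, ?_⟩
  · intro x hx
    rcases hB'A hx.1 with h | h
    · exact absurd h hx.2
    · exact h
  · rwa [Set.insert_diff_singleton, Set.insert_eq_of_mem hpB']
  · have hc : (B' \ {p}).ncard = B'.ncard - 1 := Set.ncard_diff_singleton_of_mem hpB'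
    have hpos : 0 < B'.ncard := (Set.ncard_pos hB'fin).2 ⟨p, hpB'⟩
    omega

lemma disj_of_sides (hinter : M₁.E ∩ M₂.E = {p}) {S₁ S₂ : Set α}
    (h₁ : S₁ ⊆ M₁.E \ {p}) (h₂ : S₂ ⊆ M₂.E \ {p}) : Disjoint S₁ S₂ :=
  Set.disjoint_left.2 fun x hx1 hx2 => (h₁ hx1).2 (by
    have hx : x ∈ M₁.E ∩ M₂.E := ⟨(h₁ hx1).1, (h₂ hx2).1⟩
    rwa [hinter] at hx)

variable (hinter : M₁.E ∩ M₂.E = {p})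
  (hIndep : ∀ I, M.Indep I ↔ ∃ I₁ I₂, M₁.Indep I₁ ∧ M₂.Indep I₂ ∧ p ∉ I₁ ∧ p ∉ I₂ ∧
    I = I₁ ∪ I₂ ∧ (M₁.Indep (insert p I₁) ∨ M₂.Indep (insert p I₂)))

include hinter hIndep

lemma twoSum_split {A₁ A₂ I : Set α} (hA₁ : A₁ ⊆ M₁.E \ {p}) (hA₂ : A₂ ⊆ M₂.E \ {p})
    (hI : M.Indep I) (hIA : I ⊆ A₁ ∪ A₂) :
    ∃ I₁ I₂, M₁.Indep I₁ ∧ M₂.Indep I₂ ∧ I₁ ⊆ A₁ ∧ I₂ ⊆ A₂ ∧ I = I₁ ∪ I₂ ∧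
      Disjoint I₁ I₂ ∧ (M₁.Indep (insert p I₁) ∨ M₂.Indep (insert p I₂)) := by
  obtain ⟨I₁, I₂, h1, h2, hp1, hp2, rfl, hor⟩ := (hIndep I).1 hI
  have hI1 : I₁ ⊆ M₁.E \ {p} :=
    Set.subset_diff_singleton h1.subset_ground hp1
  have hI2 : I₂ ⊆ M₂.E \ {p} :=
    Set.subset_diff_singleton h2.subset_ground hp2
  have hI1A : I₁ ⊆ A₁ := by
    intro x hx
    rcases hIA (Set.mem_union_left _ hx) with h | h
    · exact h
    · exact ((Set.disjoint_left.1 (disj_of_sides hinter hI1 hA₂)) hx h).elim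
  have hI2A : I₂ ⊆ A₂ := by
    intro x hx
    rcases hIA (Set.mem_union_right _ hx) with h | h
    · exact ((Set.disjoint_left.1 (disj_of_sides hinter hA₁ hI2)) h hx).elim
    · exact h
  exact ⟨I₁, I₂, h1, h2, hI1A, hI2A, rfl, disj_of_sides hinter hI1 hI2, hor⟩

lemma twoSum_rk_nonspanning₁ (h1 : M₁.E.Finite) (h2 : M₂.E.Finite) (hMfin : M.E.Finite)
    (hl1 : ¬ IsLoop M₁ p) {A₁ A₂ : Set α} (hA₁ : A₁ ⊆ M₁.E \ {p}) (hA₂ : A₂ ⊆ M₂.E \ {p})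
    (hns : rk M₁ (insert p A₁) = rk M₁ A₁ + 1) :
    rk M (A₁ ∪ A₂) = rk M₁ A₁ + rk M₂ A₂ := by
  refine le_antisymm (rk_le hMfin fun I hI hIA => ?_) ?_
  · obtain ⟨I₁, I₂, hi1, hi2, hI1A, hI2A, rfl, hdisj, -⟩ :=
      twoSum_split hinter hIndep hA₁ hA₂ hI hIA
    rw [Set.ncard_union_eq hdisj (h1.subset hi1.subset_ground) (h2.subset hi2.subset_ground)]
    have := le_rk h1 hi1 hI1A
    have := le_rk h2 hi2 hI2A
    omega
  · obtain ⟨B₁, hB₁i, hB₁A, hpB₁, hB₁ins, hB₁c⟩ := exists_pbasis h1 hl1 hA₁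
    obtain ⟨I₂, hI₂, hI₂A, hI₂c⟩ := exists_rk h2 A₂
    have hpI₂ : p ∉ I₂ := fun h => (hA₂ (hI₂A h)).2 rfl
    have hMI : M.Indep (B₁ ∪ I₂) :=
      (hIndep _).2 ⟨B₁, I₂, hB₁i, hI₂, hpB₁, hpI₂, rfl, Or.inl hB₁ins⟩
    have hdisj : Disjoint B₁ I₂ :=
      disj_of_sides hinter (hB₁A.trans hA₁) (hI₂A.trans hA₂)
    have hcard : (B₁ ∪ I₂).ncard = B₁.ncard + I₂.ncard :=
      Set.ncard_union_eq hdisj (h1.subset hB₁i.subset_ground) (h2.subset hI₂.subset_ground)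
    have hle := le_rk hMfin hMI (Set.union_subset_union hB₁A hI₂A)
    omega

lemma twoSum_rk_nonspanning₂ (h1 : M₁.E.Finite) (h2 : M₂.E.Finite) (hMfin : M.E.Finite)
    (hl2 : ¬ IsLoop M₂ p) {A₁ A₂ : Set α} (hA₁ : A₁ ⊆ M₁.E \ {p}) (hA₂ : A₂ ⊆ M₂.E \ {p})
    (hns : rk M₂ (insert p A₂) = rk M₂ A₂ + 1) :
    rk M (A₁ ∪ A₂) = rk M₁ A₁ + rk M₂ A₂ := by
  refine le_antisymm (rk_le hMfin fun I hI hIA => ?_) ?_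
  · obtain ⟨I₁, I₂, hi1, hi2, hI1A, hI2A, rfl, hdisj, -⟩ :=
      twoSum_split hinter hIndep hA₁ hA₂ hI hIA
    rw [Set.ncard_union_eq hdisj (h1.subset hi1.subset_ground) (h2.subset hi2.subset_ground)]
    have := le_rk h1 hi1 hI1A
    have := le_rk h2 hi2 hI2A
    omega
  · obtain ⟨B₂, hB₂i, hB₂A, hpB₂, hB₂ins, hB₂c⟩ := exists_pbasis h2 hl2 hA₂
    obtain ⟨I₁, hI₁, hI₁A, hI₁c⟩ := exists_rk h1 A₁
    have hpI₁ : p ∉ I₁ := fun h => (hA₁ (hI₁A h)).2 rfl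
    have hMI : M.Indep (I₁ ∪ B₂) :=
      (hIndep _).2 ⟨I₁, B₂, hI₁, hB₂i, hpI₁, hpB₂, rfl, Or.inr hB₂ins⟩
    have hdisj : Disjoint I₁ B₂ :=
      disj_of_sides hinter (hI₁A.trans hA₁) (hB₂A.trans hA₂)
    have hcard : (I₁ ∪ B₂).ncard = I₁.ncard + B₂.ncard :=
      Set.ncard_union_eq hdisj (h1.subset hI₁.subset_ground) (h2.subset hB₂i.subset_ground)
    have hle := le_rk hMfin hMI (Set.union_subset_union hI₁A hB₂A)
    omega

lemma twoSum_rk_spanning (h1 : M₁.E.Finite) (h2 : M₂.E.Finite) (hMfin : M.E.Finite)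
    (hl1 : ¬ IsLoop M₁ p) {A₁ A₂ : Set α} (hA₁ : A₁ ⊆ M₁.E \ {p}) (hA₂ : A₂ ⊆ M₂.E \ {p})
    (hs1 : rk M₁ (insert p A₁) = rk M₁ A₁) (hs2 : rk M₂ (insert p A₂) = rk M₂ A₂) :
    rk M (A₁ ∪ A₂) + 1 = rk M₁ A₁ + rk M₂ A₂ := by
  have ha1 : 1 ≤ rk M₁ A₁ := by
    rw [← hs1, ← rk_singleton h1 hl1]
    exact rk_mono h1 (Set.singleton_subset_iff.2 (Set.mem_insert _ _))
  have hub : rk M (A₁ ∪ A₂) ≤ rk M₁ A₁ + rk M₂ A₂ - 1 := by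
    refine rk_le hMfin fun I hI hIA => ?_
    obtain ⟨I₁, I₂, hi1, hi2, hI1A, hI2A, rfl, hdisj, hor⟩ :=
      twoSum_split hinter hIndep hA₁ hA₂ hI hIA
    have hfin1 : I₁.Finite := h1.subset hi1.subset_ground
    have hfin2 : I₂.Finite := h2.subset hi2.subset_ground
    rw [Set.ncard_union_eq hdisj hfin1 hfin2]
    have hle1 := le_rk h1 hi1 hI1A
    have hle2 := le_rk h2 hi2 hI2A
    rcases hor with hor | hor
    · have hp1 : p ∉ I₁ := fun h => (hA₁ (hI1A h)).2 rfl
      have : (insert p I₁).ncard ≤ rk M₁ (insert p A₁) :=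
        le_rk h1 hor (Set.insert_subset_insert hI1A)
      rw [Set.ncard_insert_of_notMem hp1 hfin1] at this
      omega
    · have hp2 : p ∉ I₂ := fun h => (hA₂ (hI2A h)).2 rfl
      have : (insert p I₂).ncard ≤ rk M₂ (insert p A₂) :=
        le_rk h2 hor (Set.insert_subset_insert hI2A)
      rw [Set.ncard_insert_of_notMem hp2 hfin2] at this
      have h2a : 1 ≤ rk M₂ A₂ := by omega
      omega
  have hlb : rk M₁ A₁ + rk M₂ A₂ ≤ rk M (A₁ ∪ A₂) + 1 := by
    obtain ⟨B₁, hB₁i, hB₁A, hpB₁, hB₁ins, hB₁c⟩ := exists_pbasis h1 hl1 hA₁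
    obtain ⟨I₂, hI₂, hI₂A, hI₂c⟩ := exists_rk h2 A₂
    have hpI₂ : p ∉ I₂ := fun h => (hA₂ (hI₂A h)).2 rfl
    have hMI : M.Indep (B₁ ∪ I₂) :=
      (hIndep _).2 ⟨B₁, I₂, hB₁i, hI₂, hpB₁, hpI₂, rfl, Or.inl hB₁ins⟩
    have hdisj : Disjoint B₁ I₂ :=
      disj_of_sides hinter (hB₁A.trans hA₁) (hI₂A.trans hA₂)
    have hcard : (B₁ ∪ I₂).ncard = B₁.ncard + I₂.ncard :=
      Set.ncard_union_eq hdisj (h1.subset hB₁i.subset_ground) (h2.subset hI₂.subset_ground)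
    have hle := le_rk hMfin hMI (Set.union_subset_union hB₁A hI₂A)
    omega
  omega

end TwoSumRk

section Main

variable {M M₁ M₂ : Matroid α} {p : α} {F₁ F₂ : Finset α}

lemma tutte_twoSum_pq
    (h1 : M₁.E.Finite) (h2 : M₂.E.Finite) (hinter : M₁.E ∩ M₂.E = {p})
    (hl1 : ¬ IsLoop M₁ p) (hc1 : ¬ IsColoop M₁ p)
    (hl2 : ¬ IsLoop M₂ p) (hc2 : ¬ IsColoop M₂ p)
    (hF₁ : ↑F₁ = M₁.E \ {p}) (hF₂ : ↑F₂ = M₂.E \ {p})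
    (hE : M.E = (M₁.E ∪ M₂.E) \ {p})
    (hIndep : ∀ I, M.Indep I ↔ ∃ I₁ I₂, M₁.Indep I₁ ∧ M₂.Indep I₂ ∧ p ∉ I₁ ∧ p ∉ I₂ ∧
      I = I₁ ∪ I₂ ∧ (M₁.Indep (insert p I₁) ∨ M₂.Indep (insert p I₂))) :
    tutte M = (X 1 - 1) * (pPoly M₁ p F₁ * pPoly M₂ p F₂)
      + pPoly M₁ p F₁ * qPoly M₂ p F₂
      + qPoly M₁ p F₁ * pPoly M₂ p F₂
      + (X 0 - 1) * (qPoly M₁ p F₁ * qPoly M₂ p F₂) := by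
  have hp1E : p ∈ M₁.E := by
    have : p ∈ M₁.E ∩ M₂.E := by rw [hinter]; rfl
    exact this.1
  have hp2E : p ∈ M₂.E := by
    have : p ∈ M₁.E ∩ M₂.E := by rw [hinter]; rfl
    exact this.2
  have hME : M.E = (↑F₁ : Set α) ∪ ↑F₂ := by
    rw [hE, hF₁, hF₂, Set.union_diff_distrib]
  have hMfin : M.E.Finite := by
    rw [hME]; exact (F₁.finite_toSet).union (F₂.finite_toSet)
  have hsub1 : (↑F₁ : Set α) ⊆ M₁.E \ {p} := hF₁.le
  have hsub2 : (↑F₂ : Set α) ⊆ M₂.E \ {p} := hF₂.le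
  have hdisjF : Disjoint F₁ F₂ := by
    rw [← Finset.disjoint_coe]
    exact disj_of_sides hinter hsub1 hsub2
  have hMtoF : hMfin.toFinset = F₁ ∪ F₂ := by
    apply Finset.coe_injective
    rw [Set.Finite.coe_toFinset, hME, Finset.coe_union]
  -- ground rank identity
  have hins1 : insert p ((↑F₁ : Set α)) = M₁.E := by
    rw [hF₁, Set.insert_diff_singleton, Set.insert_eq_of_mem hp1E]
  have hins2 : insert p ((↑F₂ : Set α)) = M₂.E := by
    rw [hF₂, Set.insert_diff_singleton, Set.insert_eq_of_mem hp2E]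
  have hrF1 : rk M₁ ↑F₁ = rk M₁ M₁.E := by
    rw [hF₁, rk_diff_of_not_coloop h1 hc1]
  have hrF2 : rk M₂ ↑F₂ = rk M₂ M₂.E := by
    rw [hF₂, rk_diff_of_not_coloop h2 hc2]
  have hs1E : rk M₁ (insert p (↑F₁ : Set α)) = rk M₁ ↑F₁ := by rw [hins1, hrF1]
  have hs2E : rk M₂ (insert p (↑F₂ : Set α)) = rk M₂ ↑F₂ := by rw [hins2, hrF2]
  have hR : rk M M.E + 1 = rk M₁ M₁.E + rk M₂ M₂.E := by
    rw [hME, ← hrF1, ← hrF2]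
    exact twoSum_rk_spanning hinter hIndep h1 h2 hMfin hl1 hsub1 hsub2 hs1E hs2E
  -- reindex the sum over subsets of the ground set as a double sum
  have step1 : tutte M = ∑ A₁ ∈ F₁.powerset, ∑ A₂ ∈ F₂.powerset,
      ((X 0 - 1) ^ (rk M M.E - rk M ((↑A₁ : Set α) ∪ (↑A₂ : Set α))) *
       (X 1 - 1) ^ (A₁.card + A₂.card - rk M ((↑A₁ : Set α) ∪ (↑A₂ : Set α)))
        : MvPolynomial (Fin 2) ℤ) := by
    rw [tutte, dif_pos hMfin, hMtoF, ← Finset.sum_product']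
    refine Finset.sum_nbij' (fun A => (A ∩ F₁, A ∩ F₂)) (fun x => x.1 ∪ x.2)
      ?_ ?_ ?_ ?_ ?_
    · intro A hA
      rw [Finset.mem_product]
      exact ⟨Finset.mem_powerset.2 Finset.inter_subset_right,
        Finset.mem_powerset.2 Finset.inter_subset_right⟩
    · intro x hx
      rw [Finset.mem_product] at hx
      exact Finset.mem_powerset.2 (Finset.union_subset_union
        (Finset.mem_powerset.1 hx.1) (Finset.mem_powerset.1 hx.2))
    · intro A hA
      rw [Finset.mem_powerset] at hA
      dsimp only
      rw [← Finset.inter_union_distrib_left, Finset.inter_eq_left.2 hA]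
    · intro x hx
      rw [Finset.mem_product, Finset.mem_powerset, Finset.mem_powerset] at hx
      have e1 : (x.1 ∪ x.2) ∩ F₁ = x.1 := by
        rw [Finset.union_inter_distrib_right, Finset.inter_eq_left.2 hx.1,
          Finset.disjoint_iff_inter_eq_empty.1 (Finset.disjoint_of_subset_left hx.2 hdisjF.symm),
          Finset.union_empty]
      have e2 : (x.1 ∪ x.2) ∩ F₂ = x.2 := by
        rw [Finset.union_inter_distrib_right, Finset.inter_eq_left.2 hx.2,
          Finset.disjoint_iff_inter_eq_empty.1 (Finset.disjoint_of_subset_left hx.1 hdisjF),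
          Finset.empty_union]
      exact Prod.ext e1 e2
    · intro A hA
      rw [Finset.mem_powerset] at hA
      dsimp only
      have hU : A ∩ F₁ ∪ A ∩ F₂ = A := by
        rw [← Finset.inter_union_distrib_left, Finset.inter_eq_left.2 hA]
      have hcoe : (↑(A ∩ F₁) : Set α) ∪ (↑(A ∩ F₂) : Set α) = ↑A := by
        rw [← Finset.coe_union, hU]
      have hcard : (A ∩ F₁).card + (A ∩ F₂).card = A.card := by
        rw [← Finset.card_union_of_disjoint
          (Finset.disjoint_of_subset_left Finset.inter_subset_right
            (Finset.disjoint_of_subset_right Finset.inter_subset_right hdisjF)), hU]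
      simp only [hcoe, hcard]
  rw [step1]
  have hsubA1 : ∀ A : Finset α, A ⊆ F₁ → (↑A : Set α) ⊆ M₁.E \ {p} :=
    fun A hA => (Finset.coe_subset.2 hA).trans hsub1
  have hsubA2 : ∀ A : Finset α, A ⊆ F₂ → (↑A : Set α) ⊆ M₂.E \ {p} :=
    fun A hA => (Finset.coe_subset.2 hA).trans hsub2
  have hfacts1 : ∀ A : Finset α, A ⊆ F₁ →
      rk M₁ ↑A ≤ A.card ∧ rk M₁ ↑A ≤ rk M₁ (insert p ↑A) ∧
      rk M₁ (insert p ↑A) ≤ rk M₁ ↑A + 1 ∧ rk M₁ (insert p ↑A) ≤ rk M₁ M₁.E := by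
    intro A hA
    have hsub := hsubA1 A hA
    refine ⟨?_, rk_mono h1 (Set.subset_insert _ _), rk_insert_le h1,
      rk_mono h1 (Set.insert_subset hp1E (hsub.trans Set.diff_subset))⟩
    have := rk_le_ncard (M := M₁) (A := (↑A : Set α)) h1 A.finite_toSet
    rwa [Set.ncard_coe_finset] at this
  have hfacts2 : ∀ A : Finset α, A ⊆ F₂ →
      rk M₂ ↑A ≤ A.card ∧ rk M₂ ↑A ≤ rk M₂ (insert p ↑A) ∧
      rk M₂ (insert p ↑A) ≤ rk M₂ ↑A + 1 ∧ rk M₂ (insert p ↑A) ≤ rk M₂ M₂.E := by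
    intro A hA
    have hsub := hsubA2 A hA
    refine ⟨?_, rk_mono h2 (Set.subset_insert _ _), rk_insert_le h2,
      rk_mono h2 (Set.insert_subset hp2E (hsub.trans Set.diff_subset))⟩
    have := rk_le_ncard (M := M₂) (A := (↑A : Set α)) h2 A.finite_toSet
    rwa [Set.ncard_coe_finset] at this
  have hge1 : ∀ A : Finset α, rk M₁ (insert p (↑A : Set α)) = rk M₁ ↑A → 1 ≤ rk M₁ ↑A := by
    intro A hsp
    rw [← hsp, ← rk_singleton h1 hl1]
    exact rk_mono h1 (Set.singleton_subset_iff.2 (Set.mem_insert _ _))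
  have hge2 : ∀ A : Finset α, rk M₂ (insert p (↑A : Set α)) = rk M₂ ↑A → 1 ≤ rk M₂ ↑A := by
    intro A hsp
    rw [← hsp, ← rk_singleton h2 hl2]
    exact rk_mono h2 (Set.singleton_subset_iff.2 (Set.mem_insert _ _))
  have case_ss : (∑ A₁ ∈ F₁.powerset.filter (fun A : Finset α => rk M₁ (insert p ↑A) = rk M₁ ↑A),
      ∑ A₂ ∈ F₂.powerset.filter (fun A : Finset α => rk M₂ (insert p ↑A) = rk M₂ ↑A),
      ((X 0 - 1) ^ (rk M M.E - rk M ((↑A₁ : Set α) ∪ (↑A₂ : Set α))) *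
       (X 1 - 1) ^ (A₁.card + A₂.card - rk M ((↑A₁ : Set α) ∪ (↑A₂ : Set α)))
        : MvPolynomial (Fin 2) ℤ))
      = (X 1 - 1) * (pPoly M₁ p F₁ * pPoly M₂ p F₂) := by
    rw [pPoly, pPoly, Finset.sum_mul_sum, Finset.mul_sum]
    refine Finset.sum_congr rfl fun A₁ hA₁ => ?_
    rw [Finset.mul_sum]
    refine Finset.sum_congr rfl fun A₂ hA₂ => ?_
    rw [Finset.mem_filter, Finset.mem_powerset] at hA₁ hA₂
    obtain ⟨hA₁s, hsp1⟩ := hA₁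
    obtain ⟨hA₂s, hsp2⟩ := hA₂
    obtain ⟨hcc1, hmono1, hinsle1, hinsE1⟩ := hfacts1 A₁ hA₁s
    obtain ⟨hcc2, hmono2, hinsle2, hinsE2⟩ := hfacts2 A₂ hA₂s
    have hm := twoSum_rk_spanning hinter hIndep h1 h2 hMfin hl1
      (hsubA1 A₁ hA₁s) (hsubA2 A₂ hA₂s) hsp1 hsp2
    have hg1 := hge1 A₁ hsp1
    have hg2 := hge2 A₂ hsp2
    rw [show rk M M.E - rk M ((↑A₁ : Set α) ∪ (↑A₂ : Set α))
        = (rk M₁ M₁.E - rk M₁ ↑A₁) + (rk M₂ M₂.E - rk M₂ ↑A₂) from by omega,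
      show A₁.card + A₂.card - rk M ((↑A₁ : Set α) ∪ (↑A₂ : Set α))
        = ((A₁.card - rk M₁ ↑A₁) + (A₂.card - rk M₂ ↑A₂)) + 1 from by omega,
      pow_add, pow_add, pow_succ]
    ring
  have case_sn : (∑ A₁ ∈ F₁.powerset.filter (fun A : Finset α => rk M₁ (insert p ↑A) = rk M₁ ↑A),
      ∑ A₂ ∈ F₂.powerset.filter (fun A : Finset α => ¬ (rk M₂ (insert p ↑A) = rk M₂ ↑A)),
      ((X 0 - 1) ^ (rk M M.E - rk M ((↑A₁ : Set α) ∪ (↑A₂ : Set α))) *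
       (X 1 - 1) ^ (A₁.card + A₂.card - rk M ((↑A₁ : Set α) ∪ (↑A₂ : Set α)))
        : MvPolynomial (Fin 2) ℤ))
      = pPoly M₁ p F₁ * qPoly M₂ p F₂ := by
    rw [pPoly, qPoly, Finset.sum_mul_sum]
    refine Finset.sum_congr rfl fun A₁ hA₁ => ?_
    refine Finset.sum_congr rfl fun A₂ hA₂ => ?_
    rw [Finset.mem_filter, Finset.mem_powerset] at hA₁ hA₂
    obtain ⟨hA₁s, hsp1⟩ := hA₁
    obtain ⟨hA₂s, hsp2⟩ := hA₂
    obtain ⟨hcc1, hmono1, hinsle1, hinsE1⟩ := hfacts1 A₁ hA₁s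
    obtain ⟨hcc2, hmono2, hinsle2, hinsE2⟩ := hfacts2 A₂ hA₂s
    have hns2 : rk M₂ (insert p (↑A₂ : Set α)) = rk M₂ ↑A₂ + 1 := by omega
    have hm := twoSum_rk_nonspanning₂ hinter hIndep h1 h2 hMfin hl2
      (hsubA1 A₁ hA₁s) (hsubA2 A₂ hA₂s) hns2
    have hg1 := hge1 A₁ hsp1
    rw [show rk M M.E - rk M ((↑A₁ : Set α) ∪ (↑A₂ : Set α))
        = (rk M₁ M₁.E - rk M₁ ↑A₁) + (rk M₂ M₂.E - 1 - rk M₂ ↑A₂) from by omega,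
      show A₁.card + A₂.card - rk M ((↑A₁ : Set α) ∪ (↑A₂ : Set α))
        = (A₁.card - rk M₁ ↑A₁) + (A₂.card - rk M₂ ↑A₂) from by omega,
      pow_add, pow_add]
    ring
  have case_ns : (∑ A₁ ∈ F₁.powerset.filter (fun A : Finset α => ¬ (rk M₁ (insert p ↑A) = rk M₁ ↑A)),
      ∑ A₂ ∈ F₂.powerset.filter (fun A : Finset α => rk M₂ (insert p ↑A) = rk M₂ ↑A),
      ((X 0 - 1) ^ (rk M M.E - rk M ((↑A₁ : Set α) ∪ (↑A₂ : Set α))) *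
       (X 1 - 1) ^ (A₁.card + A₂.card - rk M ((↑A₁ : Set α) ∪ (↑A₂ : Set α)))
        : MvPolynomial (Fin 2) ℤ))
      = qPoly M₁ p F₁ * pPoly M₂ p F₂ := by
    rw [qPoly, pPoly, Finset.sum_mul_sum]
    refine Finset.sum_congr rfl fun A₁ hA₁ => ?_
    refine Finset.sum_congr rfl fun A₂ hA₂ => ?_
    rw [Finset.mem_filter, Finset.mem_powerset] at hA₁ hA₂
    obtain ⟨hA₁s, hsp1⟩ := hA₁
    obtain ⟨hA₂s, hsp2⟩ := hA₂
    obtain ⟨hcc1, hmono1, hinsle1, hinsE1⟩ := hfacts1 A₁ hA₁s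
    obtain ⟨hcc2, hmono2, hinsle2, hinsE2⟩ := hfacts2 A₂ hA₂s
    have hns1 : rk M₁ (insert p (↑A₁ : Set α)) = rk M₁ ↑A₁ + 1 := by omega
    have hm := twoSum_rk_nonspanning₁ hinter hIndep h1 h2 hMfin hl1
      (hsubA1 A₁ hA₁s) (hsubA2 A₂ hA₂s) hns1
    have hg2 := hge2 A₂ hsp2
    rw [show rk M M.E - rk M ((↑A₁ : Set α) ∪ (↑A₂ : Set α))
        = (rk M₁ M₁.E - 1 - rk M₁ ↑A₁) + (rk M₂ M₂.E - rk M₂ ↑A₂) from by omega,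
      show A₁.card + A₂.card - rk M ((↑A₁ : Set α) ∪ (↑A₂ : Set α))
        = (A₁.card - rk M₁ ↑A₁) + (A₂.card - rk M₂ ↑A₂) from by omega,
      pow_add, pow_add]
    ring
  have case_nn : (∑ A₁ ∈ F₁.powerset.filter (fun A : Finset α => ¬ (rk M₁ (insert p ↑A) = rk M₁ ↑A)),
      ∑ A₂ ∈ F₂.powerset.filter (fun A : Finset α => ¬ (rk M₂ (insert p ↑A) = rk M₂ ↑A)),
      ((X 0 - 1) ^ (rk M M.E - rk M ((↑A₁ : Set α) ∪ (↑A₂ : Set α))) *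
       (X 1 - 1) ^ (A₁.card + A₂.card - rk M ((↑A₁ : Set α) ∪ (↑A₂ : Set α)))
        : MvPolynomial (Fin 2) ℤ))
      = (X 0 - 1) * (qPoly M₁ p F₁ * qPoly M₂ p F₂) := by
    rw [qPoly, qPoly, Finset.sum_mul_sum, Finset.mul_sum]
    refine Finset.sum_congr rfl fun A₁ hA₁ => ?_
    rw [Finset.mul_sum]
    refine Finset.sum_congr rfl fun A₂ hA₂ => ?_
    rw [Finset.mem_filter, Finset.mem_powerset] at hA₁ hA₂
    obtain ⟨hA₁s, hsp1⟩ := hA₁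
    obtain ⟨hA₂s, hsp2⟩ := hA₂
    obtain ⟨hcc1, hmono1, hinsle1, hinsE1⟩ := hfacts1 A₁ hA₁s
    obtain ⟨hcc2, hmono2, hinsle2, hinsE2⟩ := hfacts2 A₂ hA₂s
    have hns1 : rk M₁ (insert p (↑A₁ : Set α)) = rk M₁ ↑A₁ + 1 := by omega
    have hm := twoSum_rk_nonspanning₁ hinter hIndep h1 h2 hMfin hl1
      (hsubA1 A₁ hA₁s) (hsubA2 A₂ hA₂s) hns1
    rw [show rk M M.E - rk M ((↑A₁ : Set α) ∪ (↑A₂ : Set α))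
        = ((rk M₁ M₁.E - 1 - rk M₁ ↑A₁) + (rk M₂ M₂.E - 1 - rk M₂ ↑A₂)) + 1 from by omega,
      show A₁.card + A₂.card - rk M ((↑A₁ : Set α) ∪ (↑A₂ : Set α))
        = (A₁.card - rk M₁ ↑A₁) + (A₂.card - rk M₂ ↑A₂) from by omega,
      pow_add, pow_add, pow_succ]
    ring
  have inner : ∀ G : Finset (Finset α),
      (∑ A₁ ∈ G, ∑ A₂ ∈ F₂.powerset, ((X 0 - 1) ^ (rk M M.E - rk M ((↑A₁ : Set α) ∪ (↑A₂ : Set α))) *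
       (X 1 - 1) ^ (A₁.card + A₂.card - rk M ((↑A₁ : Set α) ∪ (↑A₂ : Set α)))
        : MvPolynomial (Fin 2) ℤ))
      = (∑ A₁ ∈ G, ∑ A₂ ∈ F₂.powerset.filter (fun A : Finset α => rk M₂ (insert p ↑A) = rk M₂ ↑A), ((X 0 - 1) ^ (rk M M.E - rk M ((↑A₁ : Set α) ∪ (↑A₂ : Set α))) *
       (X 1 - 1) ^ (A₁.card + A₂.card - rk M ((↑A₁ : Set α) ∪ (↑A₂ : Set α)))
        : MvPolynomial (Fin 2) ℤ))
        + ∑ A₁ ∈ G, ∑ A₂ ∈ F₂.powerset.filter (fun A : Finset α => ¬ (rk M₂ (insert p ↑A) = rk M₂ ↑A)), ((X 0 - 1) ^ (rk M M.E - rk M ((↑A₁ : Set α) ∪ (↑A₂ : Set α))) *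
       (X 1 - 1) ^ (A₁.card + A₂.card - rk M ((↑A₁ : Set α) ∪ (↑A₂ : Set α)))
        : MvPolynomial (Fin 2) ℤ) := by
    intro G
    rw [← Finset.sum_add_distrib]
    exact Finset.sum_congr rfl fun A₁ _ => (Finset.sum_filter_add_sum_filter_not _ _ _).symm
  calc (∑ A₁ ∈ F₁.powerset, ∑ A₂ ∈ F₂.powerset, ((X 0 - 1) ^ (rk M M.E - rk M ((↑A₁ : Set α) ∪ (↑A₂ : Set α))) *
       (X 1 - 1) ^ (A₁.card + A₂.card - rk M ((↑A₁ : Set α) ∪ (↑A₂ : Set α)))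
        : MvPolynomial (Fin 2) ℤ))
      = (∑ A₁ ∈ F₁.powerset.filter (fun A : Finset α => rk M₁ (insert p ↑A) = rk M₁ ↑A), ∑ A₂ ∈ F₂.powerset, ((X 0 - 1) ^ (rk M M.E - rk M ((↑A₁ : Set α) ∪ (↑A₂ : Set α))) *
       (X 1 - 1) ^ (A₁.card + A₂.card - rk M ((↑A₁ : Set α) ∪ (↑A₂ : Set α)))
        : MvPolynomial (Fin 2) ℤ))
        + ∑ A₁ ∈ F₁.powerset.filter (fun A : Finset α => ¬ (rk M₁ (insert p ↑A) = rk M₁ ↑A)), ∑ A₂ ∈ F₂.powerset, ((X 0 - 1) ^ (rk M M.E - rk M ((↑A₁ : Set α) ∪ (↑A₂ : Set α))) *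
       (X 1 - 1) ^ (A₁.card + A₂.card - rk M ((↑A₁ : Set α) ∪ (↑A₂ : Set α)))
        : MvPolynomial (Fin 2) ℤ) :=
      (Finset.sum_filter_add_sum_filter_not _ _ _).symm
    _ = (X 1 - 1) * (pPoly M₁ p F₁ * pPoly M₂ p F₂)
      + pPoly M₁ p F₁ * qPoly M₂ p F₂
      + qPoly M₁ p F₁ * pPoly M₂ p F₂
      + (X 0 - 1) * (qPoly M₁ p F₁ * qPoly M₂ p F₂) := by
      rw [inner, inner, case_ss, case_sn, case_ns, case_nn]
      ring

end Main

/-- the formula of Andrzejak for the Tutte polynomial of a 2-sum. -/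
theorem tutte_twoSum (M₁ M₂ M : Matroid α) (p : α)
    (h1 : M₁.E.Finite) (h2 : M₂.E.Finite) (hinter : M₁.E ∩ M₂.E = {p})
    (hl1 : ¬ IsLoop M₁ p) (hc1 : ¬ IsColoop M₁ p)
    (hl2 : ¬ IsLoop M₂ p) (hc2 : ¬ IsColoop M₂ p)
    (hE : M.E = (M₁.E ∪ M₂.E) \ {p})
    (hIndep : ∀ I, M.Indep I ↔ ∃ I₁ I₂, M₁.Indep I₁ ∧ M₂.Indep I₂ ∧ p ∉ I₁ ∧ p ∉ I₂ ∧
      I = I₁ ∪ I₂ ∧ (M₁.Indep (insert p I₁) ∨ M₂.Indep (insert p I₂))) :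
    (X 0 * X 1 - X 0 - X 1) * tutte M =
      (X 0 - 1) * (tutte (contractElem M₁ p) * tutte (contractElem M₂ p))
      - tutte (contractElem M₁ p) * tutte (deleteElem M₂ p)
      - tutte (deleteElem M₁ p) * tutte (contractElem M₂ p)
      + (X 1 - 1) * (tutte (deleteElem M₁ p) * tutte (deleteElem M₂ p)) := by
  have hp1E : p ∈ M₁.E := by
    have h : p ∈ M₁.E ∩ M₂.E := by rw [hinter]; rfl
    exact h.1
  have hp2E : p ∈ M₂.E := by
    have h : p ∈ M₁.E ∩ M₂.E := by rw [hinter]; rfl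
    exact h.2
  have hF₁ : ↑(h1.toFinset.erase p) = M₁.E \ {p} := by
    rw [Finset.coe_erase, Set.Finite.coe_toFinset]
  have hF₂ : ↑(h2.toFinset.erase p) = M₂.E \ {p} := by
    rw [Finset.coe_erase, Set.Finite.coe_toFinset]
  rw [tutte_twoSum_pq h1 h2 hinter hl1 hc1 hl2 hc2 hF₁ hF₂ hE hIndep,
    tutte_deleteElem h1 hF₁ hp1E hc1, tutte_contractElem h1 hF₁ hl1,
    tutte_deleteElem h2 hF₂ hp2E hc2, tutte_contractElem h2 hF₂ hl2]
  ring

end TuttePaper
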